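/- In a spark complex, the curvature map δ₁ from the group of degree-k spark classes to E^{k+1} is a group homomorphism whose image equals Z_I^{k+1}(E*), the group of closed elements of E^{k+1} that are F*-cohomologous to an element of I^{k+1}. -/

import Mathlib

section SparkMachinery

variable (F : ℤ → Type) [∀ k, AddCommGroup (F k)]
  (d : ∀ k : ℤ, F k →+ F (k + 1))
  (E I : ∀ k : ℤ, AddSubgroup (F k))

/-- The group of homological sparks of degree `k+1`:
elements `a ∈ F^{k+1}` with `da = φ - r`, `φ ∈ E^{k+2}`, `r ∈ I^{k+2}`. -/
def sparkSub (k : ℤ) : AddSubgroup (F (k + 1)) where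
  carrier := {a | ∃ φ ∈ E (k + 1 + 1), ∃ r ∈ I (k + 1 + 1), d (k + 1) a = φ - r}
  zero_mem' := ⟨0, (E (k + 1 + 1)).zero_mem, 0, (I (k + 1 + 1)).zero_mem, by simp⟩
  add_mem' := by
    rintro a b ⟨φ, hφ, r, hr, ha⟩ ⟨ψ, hψ, t, ht, hb⟩
    exact ⟨φ + ψ, (E _).add_mem hφ hψ, r + t, (I _).add_mem hr ht, by
      simp only [map_add, ha, hb]; abel⟩
  neg_mem' := by
    rintro a ⟨φ, hφ, r, hr, ha⟩
    exact ⟨-φ, (E _).neg_mem hφ, -r, (I _).neg_mem hr, by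
      simp only [map_neg, ha]; abel⟩

/-- The subgroup of trivial sparks `db + s`, `b ∈ F^k`, `s ∈ I^{k+1}`. -/
def trivSub (k : ℤ) : AddSubgroup (F (k + 1)) where
  carrier := {a | ∃ b : F k, ∃ s ∈ I (k + 1), a = d k b + s}
  zero_mem' := ⟨0, 0, (I (k + 1)).zero_mem, by simp⟩
  add_mem' := by
    rintro a b ⟨c, s, hs, ha⟩ ⟨c', s', hs', hb⟩
    exact ⟨c + c', s + s', (I _).add_mem hs hs', by
      simp only [ha, hb, map_add]; abel⟩
  neg_mem' := by
    rintro a ⟨c, s, hs, ha⟩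
    exact ⟨-c, -s, (I _).neg_mem hs, by simp only [ha, map_neg]; abel⟩

/-- The group of spark classes of degree `k+1`: sparks modulo trivial sparks. -/
def SparkClasses (k : ℤ) :=
  sparkSub F d E I k ⧸ (trivSub F d I k).addSubgroupOf (sparkSub F d E I k)

instance (k : ℤ) : AddCommGroup (SparkClasses F d E I k) :=
  QuotientAddGroup.Quotient.addCommGroup _

end SparkMachinery

/-- In a spark complex, the curvature map `δ₁` from the group
of spark classes of degree `k+1` to `E^{k+2}` is a group homomorphism whose
image equals `Z_I^{k+2}(E)`, the group of closed elements of `E^{k+2}` that are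
`F`-cohomologous to an element of `I^{k+2}`. -/
theorem stmt_6
    (F : ℤ → Type) [∀ k, AddCommGroup (F k)]
    (d : ∀ k : ℤ, F k →+ F (k + 1))
    (hdd : ∀ (k : ℤ) (x : F k), d (k + 1) (d k x) = 0)
    (E I : ∀ k : ℤ, AddSubgroup (F k))
    (hdE : ∀ (k : ℤ) (x : F k), x ∈ E k → d k x ∈ E (k + 1))
    (hdI : ∀ (k : ℤ) (x : F k), x ∈ I k → d k x ∈ I (k + 1))
    -- Axiom (A): the inclusion `E → F` induces an isomorphism on cohomology
    (hAinj : ∀ (j : ℤ) (e : F (j + 1)), e ∈ E (j + 1) → d (j + 1) e = 0 →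
      (∃ y : F j, d j y = e) → ∃ y ∈ E j, d j y = e)
    (hAsurj : ∀ (j : ℤ) (x : F (j + 1)), d (j + 1) x = 0 →
      ∃ e ∈ E (j + 1), d (j + 1) e = 0 ∧ ∃ y : F j, x - e = d j y)
    -- Axiom (B): `Eʲ ∩ Iʲ = 0` for `j ≥ 1`
    (hB : ∀ j : ℤ, 1 ≤ j → ∀ x : F j, x ∈ E j → x ∈ I j → x = 0)
    (k : ℤ) (hk : -1 ≤ k) :
    ∃ δ₁ : SparkClasses F d E I k →+ E (k + 1 + 1),
      (∀ (a : F (k + 1)) (ha : a ∈ sparkSub F d E I k)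
        (φ : F (k + 1 + 1)) (hφ : φ ∈ E (k + 1 + 1))
        (r : F (k + 1 + 1)) (_ : r ∈ I (k + 1 + 1)),
        d (k + 1) a = φ - r →
        δ₁ (QuotientAddGroup.mk ⟨a, ha⟩) = ⟨φ, hφ⟩) ∧
      Set.range δ₁ =
        {ψ : E (k + 1 + 1) | d (k + 1 + 1) (ψ : F (k + 1 + 1)) = 0 ∧
          ∃ r ∈ I (k + 1 + 1), ∃ α : F (k + 1),
            (ψ : F (k + 1 + 1)) - r = d (k + 1) α} := by
  classical
  -- uniqueness of the E-component
  have huniq : ∀ (φ φ' : F (k+1+1)), φ ∈ E (k+1+1) → φ' ∈ E (k+1+1) →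
      ∀ r r' : F (k+1+1), r ∈ I (k+1+1) → r' ∈ I (k+1+1) →
      φ - r = φ' - r' → φ = φ' := by
    intro φ φ' hφ hφ' r r' hr hr' h
    rw [sub_eq_sub_iff_sub_eq_sub] at h
    have h0 : φ - φ' = 0 := by
      refine hB (k+1+1) (by linarith) _ ((E _).sub_mem hφ hφ') ?_
      rw [h]; exact (I _).sub_mem hr hr'
    exact sub_eq_zero.mp h0
  -- the function on sparks
  set g : sparkSub F d E I k → E (k+1+1) := fun a =>
    ⟨a.2.choose, a.2.choose_spec.1⟩ with hg
  have gspec : ∀ (a : F (k+1)) (ha : a ∈ sparkSub F d E I k)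
      (φ : F (k+1+1)) (hφ : φ ∈ E (k+1+1)) (r : F (k+1+1)), r ∈ I (k+1+1) →
      d (k+1) a = φ - r → g ⟨a, ha⟩ = ⟨φ, hφ⟩ := by
    intro a ha φ hφ r hr hda
    obtain ⟨r', hr', hda'⟩ := ha.choose_spec.2
    exact Subtype.ext (huniq _ _ ha.choose_spec.1 hφ r' r hr' hr
      (hda'.symm.trans hda))
  have gspec' : ∀ (a : sparkSub F d E I k),
      ∃ r ∈ I (k+1+1), d (k+1) (a : F (k+1)) = (g a : F (k+1+1)) - r := by
    intro a
    obtain ⟨r', hr', hda'⟩ := a.2.choose_spec.2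
    exact ⟨r', hr', hda'⟩
  have gadd : ∀ a b : sparkSub F d E I k, g (a + b) = g a + g b := by
    intro a b
    obtain ⟨r, hr, hda⟩ := gspec' a
    obtain ⟨s, hs, hdb⟩ := gspec' b
    refine gspec _ _ _ ((E _).add_mem (g a).2 (g b).2) (r + s)
      ((I _).add_mem hr hs) ?_
    show d (k+1) ((a : F (k+1)) + b) = _
    rw [map_add, hda, hdb]; abel
  set ghom : sparkSub F d E I k →+ E (k+1+1) := AddMonoidHom.mk' g gadd with hghom
  -- trivial sparks are killed
  have hker : (trivSub F d I k).addSubgroupOf (sparkSub F d E I k) ≤ ghom.ker := by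
    rintro ⟨a, ha⟩ ⟨b, s, hs, hab⟩
    have hab' : a = d k b + s := hab
    have hda : d (k+1) a = 0 - (-(d (k+1) s)) := by
      rw [hab', map_add, hdd]; abel
    have := gspec a ha 0 (E _).zero_mem _ ((I _).neg_mem (hdI _ _ hs)) hda
    exact AddMonoidHom.mem_ker.mpr (this.trans rfl)
  refine ⟨QuotientAddGroup.lift _ ghom hker, ?_, ?_⟩
  · intro a ha φ hφ r hr hda
    exact gspec a ha φ hφ r hr hda
  · ext ψ
    constructor
    · rintro ⟨x, rfl⟩
      obtain ⟨⟨a, ha⟩, rfl⟩ := QuotientAddGroup.mk_surjective x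
      show (d (k+1+1)) ((g ⟨a, ha⟩ : F (k+1+1))) = 0 ∧ _
      obtain ⟨r, hr, hda⟩ := gspec' ⟨a, ha⟩
      have hdφ : d (k+1+1) (g ⟨a, ha⟩ : F (k+1+1)) = 0 := by
        have h1 : d (k+1+1) (d (k+1) a) = 0 := hdd (k+1) a
        rw [hda, map_sub, sub_eq_zero] at h1
        refine hB (k+1+1+1) (by linarith) _ (hdE _ _ (g ⟨a, ha⟩).2) ?_
        rw [h1]; exact hdI _ _ hr
      exact ⟨hdφ, r, hr, a, hda.symm⟩
    · rintro ⟨hdψ, r, hr, α, hα⟩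
      have hαmem : α ∈ sparkSub F d E I k := ⟨ψ, ψ.2, r, hr, hα.symm⟩
      refine ⟨QuotientAddGroup.mk ⟨α, hαmem⟩, ?_⟩
      show g ⟨α, hαmem⟩ = ψ
      exact (gspec α hαmem ψ ψ.2 r hr hα.symm).trans (Subtype.ext rfl)
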